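/- For every unary semigroup word u over an alphabet X there exists a word w in the set N such that the identity u ≈ w holds in every unary semigroup satisfying Ψ (i.e., for every unary semigroup S satisfying Ψ and every assignment θ : X → S, θ(u) = θ(w)). -/

import Mathlib

/-- Multiplication of the adjacency semigroup `A(G)` of a graph `G = ⟨V; r⟩`:
the carrier is `Option (V × V)` with `none` playing the role of the zero element. -/
noncomputable def adjMul {V : Type*} (r : V → V → Prop) :
    Option (V × V) → Option (V × V) → Option (V × V)
  | some (x, y), some (z, t) =>
      @ite _ (r y z) (Classical.propDecidable _) (some (x, t)) none
  | _, _ => none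

/-- Reversion in the adjacency semigroup: `(x,y)' = (y,x)` and `0' = 0`. -/
def adjStar {V : Type*} : Option (V × V) → Option (V × V)
  | some (x, y) => some (y, x)
  | none => none

/-- Unary semigroup words over an alphabet `X`: letters, products, and reversals. -/
inductive UWord (X : Type*) where
  | letter : X → UWord X
  | mul : UWord X → UWord X → UWord X
  | star : UWord X → UWord X

namespace UWord

variable {X : Type*}

/-- Evaluation of a unary semigroup word in a unary semigroup under an
assignment of the letters. -/
def eval {S : Type*} [Mul S] [Star S] (θ : X → S) : UWord X → S
  | .letter x => θ x
  | .mul u v => eval θ u * eval θ v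
  | .star u => Star.star (eval θ u)

/-- Evaluation of a unary semigroup word in the adjacency semigroup of the
graph `⟨V; r⟩` under an assignment `θ` of the letters. -/
noncomputable def evalA {V : Type*} (r : V → V → Prop) (θ : X → Option (V × V)) :
    UWord X → Option (V × V)
  | .letter x => θ x
  | .mul u v => adjMul r (evalA r θ u) (evalA r θ v)
  | .star u => adjStar (evalA r θ u)

/-- The set of letters occurring in a word. -/
def letters : UWord X → Set X
  | .letter x => {x}
  | .mul u v => letters u ∪ letters v
  | .star u => letters u

/-- Vertices of the graph `G[u]` of a word: `(x, false)` is the left vertex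
`ℓ_x` and `(x, true)` is the right vertex `r_x` of the letter `x`. -/
abbrev Vtx (X : Type*) := X × Bool

/-- The pair (initial vertex, final vertex) of the graph `G[u]` of a word `u`. -/
def ends : UWord X → Vtx X × Vtx X
  | .letter x => ((x, false), (x, true))
  | .mul u v => ((ends u).1, (ends v).2)
  | .star u => ((ends u).2, (ends u).1)

/-- The edge set of the graph `G[u]` of a word `u`. -/
def edges : UWord X → Set (Vtx X × Vtx X)
  | .letter _ => ∅
  | .mul u v => edges u ∪ edges v ∪ {((ends u).2, (ends v).1)}
  | .star u => edges u

end UWord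

/-- Given an assignment `θ` of letters to (nonzero) pairs, the vertex `ℓ_x`
corresponds to the left coordinate `i_x` of `θ x`, and the vertex `r_x` to the
right coordinate `j_x`. -/
def coordOf {X V : Type*} (θ : X → V × V) : UWord.Vtx X → V
  | (x, false) => (θ x).1
  | (x, true) => (θ x).2

namespace UWord

variable {X : Type*}

/-- A literal: a letter `x` or a reversed letter `x'` (a member of `X ∪ X'`). -/
inductive IsLit : UWord X → Prop
  | letter (x : X) : IsLit (.letter x)
  | starLetter (x : X) : IsLit (.star (.letter x))

/-- A (nonempty) semigroup word over the alphabet `X ∪ X'`: a product of literals. -/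
inductive IsSgWord : UWord X → Prop
  | lit {u : UWord X} : IsLit u → IsSgWord u
  | mul {u v : UWord X} : IsSgWord u → IsSgWord v → IsSgWord (.mul u v)

/-- A semigroup word over `X ∪ X'` of length at least `2`. -/
def IsSgWord2 (u : UWord X) : Prop :=
  ∃ v w : UWord X, IsSgWord v ∧ IsSgWord w ∧ u = .mul v w

/-- The set `N` of normal forms: words of the shape
`u₁(v₁)'u₂(v₂)'⋯uₙ(vₙ)'u_{n+1}` where the `vᵢ` are semigroup words over
`X ∪ X'` of length at least `2` and the `uᵢ` are possibly empty semigroup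
words over `X ∪ X'` (with `u₁` nonempty when `n = 0`): equivalently, the
words that are products of blocks, each block being a literal or the reversal
of a semigroup word of length at least `2`. -/
inductive InN : UWord X → Prop
  | sg {u : UWord X} : IsSgWord u → InN u
  | starBlock {v : UWord X} : IsSgWord2 v → InN (.star v)
  | mul {u v : UWord X} : InN u → InN v → InN (.mul u v)

/-- Normal forms in which, moreover, each reversed block `(v)'` has `v` of
length exactly `2` over `X ∪ X'`. -/
inductive InN2 : UWord X → Prop
  | sg {u : UWord X} : IsSgWord u → InN2 u
  | starBlock {v w : UWord X} : IsLit v → IsLit w → InN2 (.star (.mul v w))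
  | mul {u v : UWord X} : InN2 u → InN2 v → InN2 (.mul u v)

end UWord

universe uu vv

namespace UWord

variable {X : Type vv}

/-- Number of letters of a word. -/
def usize : UWord X → ℕ
  | .letter _ => 1
  | .mul a b => usize a + usize b
  | .star a => usize a

theorem usize_pos (u : UWord X) : 1 ≤ usize u := by
  induction u with
  | letter x => simp [usize]
  | mul a b iha ihb => simp [usize]; omega
  | star a ih => simpa [usize] using ih

/-- A block: a literal or the reversal of a semigroup word of length ≥ 2. -/
def IsBlock (b : UWord X) : Prop := IsLit b ∨ ∃ c, IsSgWord2 c ∧ b = .star c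

theorem IsBlock.inN {b : UWord X} (h : IsBlock b) : InN b := by
  rcases h with h | ⟨c, hc, rfl⟩
  · exact InN.sg (IsSgWord.lit h)
  · exact InN.starBlock hc

theorem IsSgWord2.sg {u : UWord X} (h : IsSgWord2 u) : IsSgWord u := by
  obtain ⟨v, w, hv, hw, rfl⟩ := h; exact .mul hv hw

def listProd (a : UWord X) (L : List (UWord X)) : UWord X := L.foldl UWord.mul a

@[simp] theorem listProd_nil (a : UWord X) : listProd a [] = a := rfl
@[simp] theorem listProd_cons (a b : UWord X) (L : List (UWord X)) :
    listProd a (b :: L) = listProd (a.mul b) L := rfl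

theorem listProd_inN {a : UWord X} (ha : InN a) {L : List (UWord X)}
    (hL : ∀ b ∈ L, IsBlock b) : InN (listProd a L) := by
  induction L generalizing a with
  | nil => exact ha
  | cons b L ih =>
    exact ih (InN.mul ha (hL b (by simp)).inN) (fun c hc => hL c (by simp [hc]))

theorem listProd_sg2 {a : UWord X} (ha : IsSgWord2 a) {L : List (UWord X)}
    (hL : ∀ b ∈ L, IsLit b) : IsSgWord2 (listProd a L) := by
  induction L generalizing a with
  | nil => exact ha
  | cons b L ih =>
    exact ih ⟨a, b, ha.sg, .lit (hL b (by simp)), rfl⟩ (fun c hc => hL c (by simp [hc]))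

section Eval

variable {S : Type uu} [Semigroup S] [Star S]

@[simp] theorem eval_mul (θ : X → S) (a b : UWord X) :
    eval θ (.mul a b) = eval θ a * eval θ b := rfl

@[simp] theorem eval_star (θ : X → S) (a : UWord X) :
    eval θ (.star a) = Star.star (eval θ a) := rfl

theorem eval_listProd_cons (θ : X → S) (a b : UWord X) (L : List (UWord X)) :
    eval θ (listProd a (b :: L)) = eval θ a * eval θ (listProd b L) := by
  induction L generalizing a b with
  | nil => rfl
  | cons c L ih =>
    calc eval θ (listProd (a.mul b) (c :: L))
        = eval θ (a.mul b) * eval θ (listProd c L) := ih _ _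
      _ = eval θ a * (eval θ b * eval θ (listProd c L)) := by
          rw [eval_mul, mul_assoc]
      _ = eval θ a * eval θ (listProd b (c :: L)) := by rw [ih b c]

theorem eval_listProd_append (θ : X → S) (a b : UWord X) (L M : List (UWord X)) :
    eval θ (listProd a (L ++ b :: M)) = eval θ (listProd a L) * eval θ (listProd b M) := by
  induction L generalizing a with
  | nil => exact eval_listProd_cons θ a b M
  | cons c L ih => exact ih (a.mul c)

end Eval

theorem starSg {y : UWord X} (h : IsSgWord y) :
    ∃ b : UWord X, IsBlock b ∧ usize b ≤ usize y ∧
      ∀ (S : Type uu) [Semigroup S] [Star S], (∀ x : S, Star.star (Star.star x) = x) →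
        ∀ θ : X → S, eval θ (.star y) = eval θ b := by
  cases h with
  | lit hl =>
    cases hl with
    | letter x =>
        exact ⟨.star (.letter x), Or.inl (.starLetter x), le_refl _, fun S _ _ _ θ => rfl⟩
    | starLetter x =>
        refine ⟨.letter x, Or.inl (.letter x), by simp [usize], fun S _ _ h1 θ => ?_⟩
        exact h1 (θ x)
  | mul hv hw =>
    rename_i v w
    exact ⟨.star (.mul v w), Or.inr ⟨.mul v w, ⟨v, w, hv, hw, rfl⟩, rfl⟩,
      by simp [usize], fun S _ _ _ θ => rfl⟩

theorem splitList : ∀ L : List (UWord X), (∀ b ∈ L, IsBlock b) →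
    (∀ b ∈ L, IsLit b) ∨
      ∃ P c D, (∀ b ∈ P, IsLit b) ∧ IsSgWord2 c ∧ (∀ b ∈ D, IsBlock b) ∧
        L = P ++ .star c :: D := by
  intro L
  induction L with
  | nil => exact fun _ => Or.inl (by simp)
  | cons b L ih =>
    intro hbl
    rcases hbl b (by simp) with hlit | ⟨c, hc, rfl⟩
    · rcases ih (fun x hx => hbl x (by simp [hx])) with h | ⟨P, c, D, h1, h2, h3, rfl⟩
      · refine Or.inl ?_
        intro x hx; rcases List.mem_cons.1 hx with rfl | hx
        exacts [hlit, h x hx]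
      · refine Or.inr ⟨b :: P, c, D, ?_, h2, h3, rfl⟩
        intro x hx; rcases List.mem_cons.1 hx with rfl | hx
        exacts [hlit, h1 x hx]
    · exact Or.inr ⟨[], c, L, by simp, hc, fun x hx => hbl x (by simp [hx]), rfl⟩

theorem sg_toList {u : UWord X} (h : IsSgWord u) :
    ∃ a L, IsLit a ∧ (∀ b ∈ L, IsLit b) ∧
      ∀ (S : Type uu) [Semigroup S] [Star S] (θ : X → S),
        eval θ u = eval θ (listProd a L) := by
  induction h with
  | lit hl => exact ⟨_, [], hl, by simp, fun S _ _ θ => rfl⟩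
  | mul h1 h2 ih1 ih2 =>
    obtain ⟨a1, L1, ha1, hL1, he1⟩ := ih1
    obtain ⟨a2, L2, ha2, hL2, he2⟩ := ih2
    refine ⟨a1, L1 ++ a2 :: L2, ha1, ?_, fun S _ _ θ => ?_⟩
    · intro b hb; rcases List.mem_append.1 hb with hb | hb
      · exact hL1 b hb
      · rcases List.mem_cons.1 hb with rfl | hb; exacts [ha2, hL2 b hb]
    · rw [eval_listProd_append, eval_mul, he1 S θ, he2 S θ]

theorem inN_toList {w : UWord X} (h : InN w) :
    ∃ a L, IsBlock a ∧ (∀ b ∈ L, IsBlock b) ∧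
      ∀ (S : Type uu) [Semigroup S] [Star S] (θ : X → S),
        eval θ w = eval θ (listProd a L) := by
  induction h with
  | sg hu =>
    obtain ⟨a, L, ha, hL, he⟩ := sg_toList hu
    exact ⟨a, L, Or.inl ha, fun b hb => Or.inl (hL b hb), he⟩
  | starBlock hv => exact ⟨_, [], Or.inr ⟨_, hv, rfl⟩, by simp, fun S _ _ θ => rfl⟩
  | mul h1 h2 ih1 ih2 =>
    obtain ⟨a1, L1, ha1, hL1, he1⟩ := ih1
    obtain ⟨a2, L2, ha2, hL2, he2⟩ := ih2
    refine ⟨a1, L1 ++ a2 :: L2, ha1, ?_, fun S _ _ θ => ?_⟩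
    · intro b hb; rcases List.mem_append.1 hb with hb | hb
      · exact hL1 b hb
      · rcases List.mem_cons.1 hb with rfl | hb; exacts [ha2, hL2 b hb]
    · rw [eval_listProd_append, eval_mul, he1 S θ, he2 S θ]

theorem starNorm : ∀ (n : ℕ) (a : UWord X) (L : List (UWord X)),
    usize a + (L.map usize).sum ≤ n → IsBlock a → (∀ b ∈ L, IsBlock b) →
    ∃ w : UWord X, InN w ∧ ∀ (S : Type uu) [Semigroup S] [Star S],
      (∀ x : S, Star.star (Star.star x) = x) →
      (∀ x y z : S, x * Star.star (y * z) = Star.star (y * Star.star (x * Star.star z))) →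
      (∀ x y z : S, Star.star (x * y) * z = Star.star (Star.star (Star.star x * z) * y)) →
      ∀ θ : X → S, eval θ (.star (listProd a L)) = eval θ w := by
  intro n
  induction n using Nat.strong_induction_on with
  | _ n IH =>
  intro a L hsize ha hL
  rcases splitList (a :: L)
      (by intro b hb; rcases List.mem_cons.1 hb with rfl | hb; exacts [ha, hL b hb]) with
    hall | ⟨P, c, D, hP, hc, hD, heq⟩
  · -- all literals
    rcases L with _ | ⟨b, L'⟩
    · obtain ⟨w, hw, _, hwe⟩ := starSg (IsSgWord.lit (hall a (by simp)))
      exact ⟨w, hw.inN, fun S _ _ h1 _ _ θ => hwe S h1 θ⟩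
    · refine ⟨.star (listProd a (b :: L')), InN.starBlock ?_, fun S _ _ _ _ _ θ => rfl⟩
      exact listProd_sg2 ⟨a, b, .lit (hall a (by simp)), .lit (hall b (by simp)), rfl⟩
        (fun x hx => hall x (by simp [hx]))
  · obtain ⟨y, z, hy, hz, rfl⟩ := hc
    obtain ⟨by_, hbyB, hbys, hbye⟩ := starSg hy
    obtain ⟨bz, hbzB, hbzs, hbze⟩ := starSg hz
    have hys := usize_pos y
    have hzs := usize_pos z
    rcases P with _ | ⟨p, P'⟩ <;> rcases D with _ | ⟨d, D'⟩ <;>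
      simp only [List.nil_append, List.cons_append, List.cons.injEq] at heq
    · -- P = [], D = []
      obtain ⟨rfl, rfl⟩ := heq
      refine ⟨.mul y z, InN.sg (.mul hy hz), fun S _ _ h1 _ _ θ => ?_⟩
      simp [h1]
    · -- P = [], D = d :: D'
      obtain ⟨rfl, rfl⟩ := heq
      simp only [List.map_cons, List.sum_cons, usize] at hsize
      have hlt : usize by_ + ((d :: D').map usize).sum < n := by
        simp only [List.map_cons, List.sum_cons]; omega
      obtain ⟨w1, hw1N, hw1e⟩ := IH _ hlt by_ (d :: D') le_rfl hbyB hD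
      refine ⟨.mul w1 z, InN.mul hw1N (.sg hz), fun S _ _ h1 h2 h3 θ => ?_⟩
      have hby' : eval θ by_ = Star.star (eval θ y) := (hbye S h1 θ).symm
      have e2 := eval_listProd_cons θ by_ d D'
      have ew1 := hw1e S h1 h2 h3 θ
      simp only [eval_star] at ew1
      rw [eval_star, eval_mul, eval_listProd_cons, eval_star, eval_mul, h3, h1,
        ← hby', ← e2, ew1]
    · -- P = p :: P', D = []
      obtain ⟨rfl, rfl⟩ := heq
      simp only [List.map_append, List.map_cons, List.map_nil, List.sum_append,
        List.sum_cons, List.sum_nil, usize] at hsize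
      have hlt : usize a + ((P' ++ [bz]).map usize).sum < n := by
        simp only [List.map_append, List.map_cons, List.map_nil, List.sum_append,
          List.sum_cons, List.sum_nil]
        omega
      have hblocks : ∀ b ∈ P' ++ [bz], IsBlock b := by
        intro b hb
        rcases List.mem_append.1 hb with hb | hb
        · exact Or.inl (hP b (by simp [hb]))
        · rcases List.mem_cons.1 hb with rfl | hb
          · exact hbzB
          · simp at hb
      obtain ⟨w2, hw2N, hw2e⟩ := IH _ hlt a (P' ++ [bz]) le_rfl ha hblocks
      refine ⟨.mul y w2, InN.mul (.sg hy) hw2N, fun S _ _ h1 h2 h3 θ => ?_⟩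
      have hbz' : eval θ bz = Star.star (eval θ z) := (hbze S h1 θ).symm
      have e3 := eval_listProd_append θ a bz P' []
      simp only [listProd_nil] at e3
      have ew2 := hw2e S h1 h2 h3 θ
      simp only [eval_star] at ew2
      rw [eval_star, eval_mul, eval_listProd_append, listProd_nil, eval_star, eval_mul,
        h2, h1, ← hbz', ← e3, ew2]
    · -- P = p :: P', D = d :: D'
      obtain ⟨rfl, rfl⟩ := heq
      have hds := usize_pos d
      have hps := usize_pos a
      simp only [List.map_append, List.map_cons, List.sum_append, List.sum_cons,
        usize] at hsize
      have hlt1 : usize by_ + ((d :: D').map usize).sum < n := by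
        simp only [List.map_cons, List.sum_cons]; omega
      have hlt2 : usize a + ((P' ++ [bz]).map usize).sum < n := by
        simp only [List.map_append, List.map_cons, List.map_nil, List.sum_append,
          List.sum_cons, List.sum_nil]
        omega
      have hblocks : ∀ b ∈ P' ++ [bz], IsBlock b := by
        intro b hb
        rcases List.mem_append.1 hb with hb | hb
        · exact Or.inl (hP b (by simp [hb]))
        · rcases List.mem_cons.1 hb with rfl | hb
          · exact hbzB
          · simp at hb
      have hD' : ∀ b ∈ d :: D', IsBlock b := fun b hb => hD b hb
      obtain ⟨w1, hw1N, hw1e⟩ := IH _ hlt1 by_ (d :: D') le_rfl hbyB hD'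
      obtain ⟨w2, hw2N, hw2e⟩ := IH _ hlt2 a (P' ++ [bz]) le_rfl ha hblocks
      refine ⟨.mul w1 w2, InN.mul hw1N hw2N, fun S _ _ h1 h2 h3 θ => ?_⟩
      have hby' : eval θ by_ = Star.star (eval θ y) := (hbye S h1 θ).symm
      have hbz' : eval θ bz = Star.star (eval θ z) := (hbze S h1 θ).symm
      have e2 := eval_listProd_cons θ by_ d D'
      have e3 := eval_listProd_append θ a bz P' []
      simp only [listProd_nil] at e3
      have ew1 := hw1e S h1 h2 h3 θ
      simp only [eval_star] at ew1
      have ew2 := hw2e S h1 h2 h3 θ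
      simp only [eval_star] at ew2
      rw [eval_star, eval_mul, eval_listProd_append, eval_listProd_cons, eval_star,
        eval_mul, h3, h2, h1, ← hby', ← e2, ew1, ← hbz', ← e3, ew2]

end UWord

/-- Proposition: every unary semigroup word reduces, modulo the identities
`Ψ = {x'' ≈ x, x(yz)' ≈ (y(xz')')', (xy)'z ≈ ((x'z)'y)'}`, to a word in `N`. -/
theorem exists_normal_form_mod_Psi {X : Type v} (u : UWord X) :
    ∃ w : UWord X, UWord.InN w ∧
      ∀ (S : Type u) [Semigroup S] [Star S],
        (∀ x : S, star (star x) = x) →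
        (∀ x y z : S, x * star (y * z) = star (y * star (x * star z))) →
        (∀ x y z : S, star (x * y) * z = star (star (star x * z) * y)) →
        ∀ θ : X → S, u.eval θ = w.eval θ := by
  induction u with
  | letter x =>
    exact ⟨.letter x, .sg (.lit (.letter x)), fun S _ _ _ _ _ θ => rfl⟩
  | mul a b iha ihb =>
    obtain ⟨w1, h1N, h1e⟩ := iha
    obtain ⟨w2, h2N, h2e⟩ := ihb
    refine ⟨.mul w1 w2, .mul h1N h2N, fun S _ _ hA hB hC θ => ?_⟩
    show UWord.eval θ (.mul a b) = UWord.eval θ (.mul w1 w2)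
    rw [UWord.eval_mul, UWord.eval_mul, h1e S hA hB hC θ, h2e S hA hB hC θ]
  | star a ih =>
    obtain ⟨w1, h1N, h1e⟩ := ih
    obtain ⟨c, L, hc, hL, hflat⟩ := UWord.inN_toList h1N
    obtain ⟨w, hwN, hwe⟩ :=
      UWord.starNorm (UWord.usize c + (L.map UWord.usize).sum) c L le_rfl hc hL
    refine ⟨w, hwN, fun S _ _ hA hB hC θ => ?_⟩
    have h : UWord.eval θ (.star a) = UWord.eval θ (.star (UWord.listProd c L)) := by
      rw [UWord.eval_star, UWord.eval_star, h1e S hA hB hC θ, hflat S θ]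
    exact h.trans (hwe S hA hB hC θ)
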